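/- Let K ≥ 5 be odd, identify V_K = Z/KZ, and for an ordered pair (u,v) with dist(u,v) > 1 in the cycle graph C_K let T(u,v) be the unique neighbor w of u with dist(w,v) = dist(u,v) - 1. Fix j ∈ V_K and let D: V_K → V_K be an arbitrary map. Then (1/K!) Σ_{π ∈ S_K} #{ i ∈ V_K : dist(π(i), D(i)) > 1 and T(π(i), D(i)) = π(j) } = (K-3)/K. -/

import Mathlib

set_option linter.unusedSectionVars false
set_option linter.unusedVariables false
set_option linter.unusedTactic false

/-- Graph distance on the cycle `C_K` with vertices `Z/KZ`. -/
def cycleDist (K : ℕ) [NeZero K] (u v : ZMod K) : ℕ :=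
  min (u - v).val (v - u).val

open Finset


section aux
variable {K : ℕ} [NeZero K]

lemma cycleDist_shift (u v : ZMod K) : cycleDist K u v = cycleDist K (u - v) 0 := by
  simp [cycleDist, sub_zero, zero_sub, neg_sub]

lemma cycleDist_self (u : ZMod K) : cycleDist K u u = 0 := by
  simp [cycleDist]

lemma neg_natCast_val {m : ℕ} (h0 : 0 < m) (h1 : m < K) :
    (-(m : ZMod K)).val = K - m := by
  have h : (-(m : ZMod K)) = ((K - m : ℕ) : ZMod K) := by
    push_cast [Nat.cast_sub h1.le]
    simp [ZMod.natCast_self]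
  rw [h, ZMod.val_cast_of_lt (by omega)]

lemma cycleDist_natCast {m : ℕ} (h0 : 0 < m) (h1 : m < K) :
    cycleDist K (m : ZMod K) 0 = min m (K - m) := by
  rw [cycleDist, sub_zero, zero_sub, ZMod.val_cast_of_lt h1, neg_natCast_val h0 h1]

lemma eq_sub_one_or_add_one_of_dist_one {u w : ZMod K} (hK : 1 < K)
    (h : cycleDist K u w = 1) : w = u - 1 ∨ w = u + 1 := by
  rcases le_total (u - w).val (w - u).val with hle | hle
  · left
    have hv : (u - w).val = 1 := by rw [cycleDist, min_eq_left hle] at h; exact h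
    have huw : u - w = 1 := by
      have h2 := ZMod.natCast_zmod_val (u - w)
      rw [hv] at h2; simpa using h2.symm
    linear_combination -huw
  · right
    have hv : (w - u).val = 1 := by rw [cycleDist, min_eq_right hle] at h; exact h
    have huw : w - u = 1 := by
      have h2 := ZMod.natCast_zmod_val (w - u)
      rw [hv] at h2; simpa using h2.symm
    linear_combination huw
end aux

lemma cycleDist_comm {K : ℕ} [NeZero K] (u v : ZMod K) :
    cycleDist K u v = cycleDist K v u := by
  rw [cycleDist, cycleDist, min_comm]

lemma good_count {K : ℕ} [NeZero K] (hK : 5 ≤ K) (hodd : Odd K) (d : ZMod K) :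
    (Finset.univ.filter (fun p : ZMod K × ZMod K =>
      1 < cycleDist K p.1 d ∧ cycleDist K p.1 p.2 = 1 ∧
      cycleDist K p.2 d = cycleDist K p.1 d - 1)).card = K - 3 := by
  have hK2 : K % 2 = 1 := Nat.odd_iff.mp hodd
  have hcard : (Finset.Ioo 1 (K-1)).card = K - 3 := by
    rw [Nat.card_Ioo]; omega
  rw [← hcard]
  apply (Finset.card_nbij' (fun m : ℕ => ((d + (m : ZMod K),
      d + (if 2*m < K then ((m-1 : ℕ) : ZMod K) else ((m+1 : ℕ) : ZMod K))) : ZMod K × ZMod K))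
    (fun p => (p.1 - d).val) ?_ ?_ ?_ ?_).symm
  · -- forward membership
    rintro m hm
    simp only [Finset.mem_coe, Finset.mem_Ioo] at hm
    obtain ⟨hm1, hm2⟩ := hm
    simp only [Finset.mem_coe, Finset.mem_filter, Finset.mem_univ, true_and]
    have hd1 : cycleDist K (d + (m:ZMod K)) d = min m (K - m) := by
      rw [cycleDist_shift, add_sub_cancel_left, cycleDist_natCast (by omega) (by omega)]
    by_cases h2m : 2*m < K
    · simp only [if_pos h2m]
      refine ⟨by rw [hd1]; omega, ?_, ?_⟩
      · rw [cycleDist_shift]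
        have h : d + (m:ZMod K) - (d + ((m-1:ℕ):ZMod K)) = ((1:ℕ) : ZMod K) := by
          push_cast [Nat.cast_sub (by omega : 1 ≤ m)]; ring
        rw [h, cycleDist_natCast (by omega) (by omega)]
        omega
      · rw [cycleDist_shift, add_sub_cancel_left,
          cycleDist_natCast (by omega : 0 < m - 1) (by omega), hd1]
        omega
    · simp only [if_neg h2m]
      refine ⟨by rw [hd1]; omega, ?_, ?_⟩
      · rw [cycleDist_comm, cycleDist_shift]
        have h : d + ((m+1:ℕ):ZMod K) - (d + (m:ZMod K)) = ((1:ℕ) : ZMod K) := by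
          push_cast; ring
        rw [h, cycleDist_natCast (by omega) (by omega)]
        omega
      · rw [cycleDist_shift, add_sub_cancel_left,
          cycleDist_natCast (by omega : 0 < m + 1) (by omega), hd1]
        omega
  · -- backward membership
    rintro ⟨p1, p2⟩ hp
    simp only [Finset.mem_coe, Finset.mem_filter, Finset.mem_univ, true_and] at hp
    obtain ⟨h1, h2, h3⟩ := hp
    simp only [Finset.mem_coe, Finset.mem_Ioo]
    set u := p1 - d with hu
    have hmlt : u.val < K := ZMod.val_lt u
    have hm0 : 0 < u.val := by
      rcases Nat.eq_zero_or_pos u.val with h0 | h0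
      · exfalso
        have : u = 0 := by rwa [← ZMod.val_eq_zero]
        rw [cycleDist_shift, ← hu, this, cycleDist_self] at h1
        omega
      · exact h0
    have hdist : cycleDist K p1 d = min u.val (K - u.val) := by
      have h := cycleDist_natCast (K := K) hm0 hmlt
      rw [ZMod.natCast_zmod_val] at h
      rw [cycleDist_shift, ← hu, h]
    rw [hdist] at h1
    omega
  · -- left inverse
    intro m hm
    simp only [Finset.mem_coe, Finset.mem_Ioo] at hm
    simp only [add_sub_cancel_left, ZMod.val_cast_of_lt (by omega : m < K)]
  · -- right inverse
    rintro ⟨p1, p2⟩ hp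
    simp only [Finset.mem_coe, Finset.mem_filter, Finset.mem_univ, true_and] at hp
    obtain ⟨h1, h2, h3⟩ := hp
    dsimp only
    set u := p1 - d with hu
    set m := u.val with hm
    have hmlt : m < K := ZMod.val_lt u
    have hm0 : 0 < m := by
      rcases Nat.eq_zero_or_pos m with h0 | h0
      · exfalso
        have : u = 0 := by rwa [← ZMod.val_eq_zero]
        rw [cycleDist_shift, ← hu, this, cycleDist_self] at h1
        omega
      · exact h0
    have hum : (m : ZMod K) = u := ZMod.natCast_zmod_val u
    have hdist : cycleDist K p1 d = min m (K - m) := by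
      rw [cycleDist_shift, ← hu, ← hum, cycleDist_natCast hm0 hmlt]
    have hm1 : 1 < m ∧ m < K - 1 := by rw [hdist] at h1; omega
    have hp1 : d + (m : ZMod K) = p1 := by rw [hum, hu]; ring
    have hsub : ((m - 1 : ℕ) : ZMod K) = (m : ZMod K) - 1 := by
      push_cast [Nat.cast_sub (by omega : 1 ≤ m)]; ring
    rcases eq_sub_one_or_add_one_of_dist_one (by omega) h2 with hw | hw
    · -- p2 = p1 - 1 : show 2*m < K
      have hd2 : cycleDist K p2 d = min (m-1) (K - (m-1)) := by
        rw [hw, cycleDist_shift]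
        have : p1 - 1 - d = ((m - 1 : ℕ) : ZMod K) := by rw [hsub, hum, hu]; ring
        rw [this, cycleDist_natCast (by omega) (by omega)]
      rw [hd2, hdist] at h3
      have h2m : 2*m < K := by omega
      simp only [if_pos h2m, Prod.mk.injEq]
      refine ⟨hp1, ?_⟩
      rw [hsub, hum, hw]; ring
    · -- p2 = p1 + 1 : show ¬(2*m < K)
      have hd2 : cycleDist K p2 d = min (m+1) (K - (m+1)) := by
        rw [hw, cycleDist_shift]
        have : p1 + 1 - d = ((m + 1 : ℕ) : ZMod K) := by push_cast [hum, hu]; ring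
        rw [this, cycleDist_natCast (by omega) (by omega)]
      rw [hd2, hdist] at h3
      have h2m : ¬ (2*m < K) := by omega
      simp only [if_neg h2m, Prod.mk.injEq]
      refine ⟨hp1, ?_⟩
      push_cast [hum, hw]; ring



lemma fiber_eq {α : Type*} [DecidableEq α] [Fintype α] (i j : α)
    {u w u' w' : α} (huw : u ≠ w) (h' : u' ≠ w') :
    (univ.filter (fun π : Equiv.Perm α => π i = u ∧ π j = w)).card =
    (univ.filter (fun π : Equiv.Perm α => π i = u' ∧ π j = w')).card := by
  have h1 : Equiv.swap w w' u ≠ w' := by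
    rw [Ne, Equiv.swap_apply_eq_iff, Equiv.swap_apply_right]
    exact huw
  obtain ⟨σ, hσu, hσw⟩ : ∃ σ : Equiv.Perm α, σ u = u' ∧ σ w = w' := by
    refine ⟨(Equiv.swap u' (Equiv.swap w w' u)) * Equiv.swap w w', ?_, ?_⟩
    · simp [Equiv.Perm.mul_apply, Equiv.swap_apply_left]
    · simp [Equiv.Perm.mul_apply, Equiv.swap_apply_right,
        Equiv.swap_apply_of_ne_of_ne h'.symm (Ne.symm h1)]
  refine Finset.card_nbij' (fun π => σ * π) (fun π => σ⁻¹ * π) ?_ ?_ ?_ ?_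
  · intro π hπ
    simp only [Finset.mem_coe, mem_filter, mem_univ, true_and] at hπ ⊢
    simp [Equiv.Perm.mul_apply, hπ.1, hπ.2, hσu, hσw]
  · intro π hπ
    simp only [Finset.mem_coe, mem_filter, mem_univ, true_and] at hπ ⊢
    constructor
    · simp [Equiv.Perm.mul_apply, hπ.1, ← hσu]
    · simp [Equiv.Perm.mul_apply, hπ.2, ← hσw]
  · intro π _; simp [mul_assoc, ← Equiv.Perm.mul_apply]
  · intro π _; group

lemma fiber_total {α : Type*} [DecidableEq α] [Fintype α] {i j : α} (hij : i ≠ j)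
    {u w : α} (huw : u ≠ w) :
    (univ.filter (fun π : Equiv.Perm α => π i = u ∧ π j = w)).card *
      (Fintype.card α * (Fintype.card α - 1)) = (Fintype.card α).factorial := by
  set n := Fintype.card α with hn
  have hpart : (Fintype.card α).factorial =
      ∑ p ∈ (univ : Finset α).offDiag,
        (univ.filter (fun π : Equiv.Perm α => (π i, π j) = p)).card := by
    rw [← Fintype.card_perm, ← Finset.card_univ]
    apply Finset.card_eq_sum_card_fiberwise
    intro π _
    simp only [Finset.mem_coe, Finset.mem_offDiag, mem_univ, true_and]
    exact fun h => hij (π.injective h)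
  have hconst : ∀ p ∈ (univ : Finset α).offDiag,
      (univ.filter (fun π : Equiv.Perm α => (π i, π j) = p)).card =
      (univ.filter (fun π : Equiv.Perm α => π i = u ∧ π j = w)).card := by
    rintro ⟨p1, p2⟩ hp
    simp only [Finset.mem_offDiag, mem_univ, true_and] at hp
    have heq : (univ.filter (fun π : Equiv.Perm α => (π i, π j) = (p1, p2))) =
        (univ.filter (fun π : Equiv.Perm α => π i = p1 ∧ π j = p2)) := by
      apply Finset.filter_congr; intro π _; simp [Prod.ext_iff]
    rw [heq]
    exact fiber_eq i j hp huw
  rw [Finset.sum_congr rfl hconst, Finset.sum_const, smul_eq_mul,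
    Finset.offDiag_card, Finset.card_univ, ← hn] at hpart
  rw [hpart, Nat.mul_sub, mul_one, mul_comm]


/-- Lemma 5 (cycle): for odd `K ≥ 5`, a fixed `j` and an arbitrary destination
map `D`, the average over uniform permutations `π` of the number of `i` with
`dist(π(i),D(i)) > 1` whose (unique) next hop from `π(i)` toward `D(i)` is
`π(j)` equals `(K-3)/K`. -/
theorem cycle_transit_rate (K : ℕ) [NeZero K] (hK : 5 ≤ K) (hodd : Odd K)
    (j : ZMod K) (D : ZMod K → ZMod K) :
    (∑ π : Equiv.Perm (ZMod K),
      ((Finset.univ.filter (fun i : ZMod K =>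
        1 < cycleDist K (π i) (D i) ∧
        cycleDist K (π i) (π j) = 1 ∧
        cycleDist K (π j) (D i) = cycleDist K (π i) (D i) - 1)).card : ℚ)) /
      (Nat.factorial K : ℚ) = ((K : ℚ) - 3) / (K : ℚ) := by
  classical
  have hcard : Fintype.card (ZMod K) = K := ZMod.card K
  set P : ZMod K → ZMod K × ZMod K → Prop := fun i p =>
    1 < cycleDist K p.1 (D i) ∧ cycleDist K p.1 p.2 = 1 ∧
    cycleDist K p.2 (D i) = cycleDist K p.1 (D i) - 1 with hP
  -- the per-index sums
  have key : ∀ i : ZMod K,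
      (∑ π : Equiv.Perm (ZMod K), if P i (π i, π j) then 1 else 0) * (K * (K - 1)) =
      if i = j then 0 else (K - 3) * K.factorial := by
    intro i
    by_cases hij : i = j
    · simp only [if_pos hij]
      have : ∀ π : Equiv.Perm (ZMod K), (if P i (π i, π j) then 1 else 0) = 0 := by
        intro π
        rw [if_neg]
        rintro ⟨-, h2, -⟩
        rw [hij, cycleDist_self] at h2
        exact one_ne_zero h2.symm
      simp [this]
    · simp only [if_neg hij]
      -- group by fibers of π ↦ (π i, π j)
      have hgroup : (∑ π : Equiv.Perm (ZMod K), if P i (π i, π j) then 1 else 0) =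
          ∑ p ∈ (univ : Finset (ZMod K × ZMod K)).filter (P i),
            (univ.filter (fun π : Equiv.Perm (ZMod K) => π i = p.1 ∧ π j = p.2)).card := by
        rw [← Finset.sum_fiberwise_of_maps_to
          (fun (π : Equiv.Perm (ZMod K)) _ => Finset.mem_univ ((π i, π j)))
          (fun π => if P i (π i, π j) then 1 else 0)]
        have step : ∀ p : ZMod K × ZMod K,
            (∑ π ∈ univ.filter (fun π : Equiv.Perm (ZMod K) => (π i, π j) = p),
              if P i (π i, π j) then 1 else 0) =
            if P i p then (univ.filter
              (fun π : Equiv.Perm (ZMod K) => π i = p.1 ∧ π j = p.2)).card else 0 := by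
          intro p
          have h1 : (∑ π ∈ univ.filter (fun π : Equiv.Perm (ZMod K) => (π i, π j) = p),
              if P i (π i, π j) then 1 else 0) =
              ∑ π ∈ univ.filter (fun π : Equiv.Perm (ZMod K) => (π i, π j) = p),
              if P i p then 1 else 0 := by
            apply Finset.sum_congr rfl
            intro π hπ
            simp only [mem_filter] at hπ
            rw [hπ.2]
          rw [h1, Finset.sum_const, smul_eq_mul, mul_ite, mul_one, mul_zero]
          congr 1
          apply congrArg
          apply Finset.filter_congr
          intro π _
          simp [Prod.ext_iff]
        rw [Finset.sum_congr rfl (fun p _ => step p), ← Finset.sum_filter]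
      rw [hgroup, Finset.sum_mul]
      have hconst : ∀ p ∈ (univ : Finset (ZMod K × ZMod K)).filter (P i),
          (univ.filter (fun π : Equiv.Perm (ZMod K) => π i = p.1 ∧ π j = p.2)).card *
            (K * (K - 1)) = K.factorial := by
        intro p hp
        simp only [mem_filter, mem_univ, true_and, hP] at hp
        have hne : p.1 ≠ p.2 := by
          intro h
          have := hp.2.1
          rw [h, cycleDist_self] at this
          exact one_ne_zero this.symm
        have := fiber_total (α := ZMod K) hij hne
        rwa [hcard] at this
      rw [Finset.sum_congr rfl hconst, Finset.sum_const, smul_eq_mul]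
      congr 1
      exact good_count hK hodd (D i)
  -- total (natural number) identity
  have total : (∑ π : Equiv.Perm (ZMod K),
      (Finset.univ.filter (fun i : ZMod K =>
        1 < cycleDist K (π i) (D i) ∧
        cycleDist K (π i) (π j) = 1 ∧
        cycleDist K (π j) (D i) = cycleDist K (π i) (D i) - 1)).card) * (K * (K - 1)) =
      (K - 1) * ((K - 3) * K.factorial) := by
    have h1 : (∑ π : Equiv.Perm (ZMod K),
        (Finset.univ.filter (fun i : ZMod K =>
          1 < cycleDist K (π i) (D i) ∧
          cycleDist K (π i) (π j) = 1 ∧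
          cycleDist K (π j) (D i) = cycleDist K (π i) (D i) - 1)).card) =
        ∑ i : ZMod K, ∑ π : Equiv.Perm (ZMod K), if P i (π i, π j) then 1 else 0 := by
      rw [Finset.sum_comm]
      apply Finset.sum_congr rfl
      intro π _
      rw [Finset.card_filter]
    rw [h1, Finset.sum_mul]
    rw [Finset.sum_congr rfl (fun i _ => key i)]
    rw [← Finset.sum_erase_add _ _ (Finset.mem_univ j), if_pos rfl, add_zero]
    have h2 : ∀ i ∈ (univ : Finset (ZMod K)).erase j,
        (if i = j then 0 else (K - 3) * K.factorial) = (K - 3) * K.factorial := by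
      intro i hi
      rw [if_neg (Finset.mem_erase.mp hi).1]
    rw [Finset.sum_congr rfl h2, Finset.sum_const, smul_eq_mul,
      Finset.card_erase_of_mem (Finset.mem_univ j), Finset.card_univ, hcard]
  -- pass to ℚ
  have hK0 : (K : ℚ) ≠ 0 := Nat.cast_ne_zero.mpr (by omega)
  have hK1 : (K : ℚ) - 1 ≠ 0 := by
    have : (1:ℚ) < (K:ℚ) := by exact_mod_cast (by omega : 1 < K)
    intro h; linarith
  have hfact : (K.factorial : ℚ) ≠ 0 := Nat.cast_ne_zero.mpr (Nat.factorial_ne_zero K)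
  have totalQ : (∑ π : Equiv.Perm (ZMod K),
      ((Finset.univ.filter (fun i : ZMod K =>
        1 < cycleDist K (π i) (D i) ∧
        cycleDist K (π i) (π j) = 1 ∧
        cycleDist K (π j) (D i) = cycleDist K (π i) (D i) - 1)).card : ℚ)) *
      ((K : ℚ) * ((K : ℚ) - 1)) = ((K : ℚ) - 1) * (((K : ℚ) - 3) * (K.factorial : ℚ)) := by
    have := congrArg (fun n : ℕ => (n : ℚ)) total
    push_cast [Nat.cast_sub (by omega : 1 ≤ K), Nat.cast_sub (by omega : 3 ≤ K)] at this
    linarith [this]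
  rw [div_eq_div_iff hfact hK0]
  have hcancel : ((∑ π : Equiv.Perm (ZMod K),
      ((Finset.univ.filter (fun i : ZMod K =>
        1 < cycleDist K (π i) (D i) ∧
        cycleDist K (π i) (π j) = 1 ∧
        cycleDist K (π j) (D i) = cycleDist K (π i) (D i) - 1)).card : ℚ)) * (K : ℚ)) *
      ((K : ℚ) - 1) = (((K : ℚ) - 3) * (K.factorial : ℚ)) * ((K : ℚ) - 1) := by
    linear_combination totalQ
  exact mul_right_cancel₀ hK1 hcancel
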